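/- Let ζ, η be independent nonnegative random variables. If the support of the distribution of the sum ζ + η is contained in a set a + bℤ for some reals a, b, then there exist reals a₁, b₁ such that both supports of ζ and η are contained in translates of b₁ℤ with the same span; equivalently, if the union of the supports of ζ and η is not contained in any set a + bℤ, then ζ + η is nonlattice. -/

import Mathlib

open Set Filter MeasureTheory ProbabilityTheory Topology

/-- If `ζ` and `η` are independent nonnegative random variables and the sum `ζ + η` is
lattice (its support lies in some `a + bℤ`, `b ≠ 0`), then `ζ` and `η` are themselves
supported in translates `a₁ + b₁ℤ` and `a₂ + b₁ℤ` of a common lattice `b₁ℤ`. -/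
theorem lattice_sum_of_indep {Ω : Type*} [MeasurableSpace Ω]
    (P : Measure Ω) [IsProbabilityMeasure P]
    (ζ η : Ω → ℝ) (hζ : Measurable ζ) (hη : Measurable η)
    (hζ0 : ∀ ω, 0 ≤ ζ ω) (hη0 : ∀ ω, 0 ≤ η ω)
    (hindep : IndepFun ζ η P)
    (a b : ℝ) (hb : b ≠ 0)
    (hsum : ∀ᵐ ω ∂P, ∃ n : ℤ, ζ ω + η ω = a + b * n) :
    ∃ a₁ a₂ b₁ : ℝ, b₁ ≠ 0 ∧
      (∀ᵐ ω ∂P, ∃ n : ℤ, ζ ω = a₁ + b₁ * n) ∧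
      (∀ᵐ ω ∂P, ∃ n : ℤ, η ω = a₂ + b₁ * n) := by
  set μ : Measure ℝ := P.map ζ with hμ
  set ν : Measure ℝ := P.map η with hν
  haveI : IsProbabilityMeasure μ := Measure.isProbabilityMeasure_map hζ.aemeasurable
  haveI : IsProbabilityMeasure ν := Measure.isProbabilityMeasure_map hη.aemeasurable
  have hmap : P.map (fun ω => (ζ ω, η ω)) = μ.prod ν :=
    (indepFun_iff_map_prod_eq_prod_map_map hζ.aemeasurable hη.aemeasurable).mp hindep
  set S : Set (ℝ × ℝ) := {p : ℝ × ℝ | ∃ n : ℤ, p.1 + p.2 = a + b * n} with hS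
  have mS : MeasurableSet S := by
    have : S = ⋃ n : ℤ, (fun p : ℝ × ℝ => p.1 + p.2) ⁻¹' {a + b * n} := by
      ext p; simp [hS]
    rw [this]
    exact MeasurableSet.iUnion fun n =>
      (measurable_fst.add measurable_snd) (measurableSet_singleton _)
  have hS1 : (μ.prod ν) S = 1 := by
    rw [← hmap, Measure.map_apply (hζ.prodMk hη) mS]
    rw [← prob_compl_eq_zero_iff (mS.preimage (hζ.prodMk hη))]
    have := hsum
    rw [ae_iff] at this
    convert this using 2
    rfl
  have hint : ∫⁻ x, ν (Prod.mk x ⁻¹' S) ∂μ = 1 := by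
    rw [← Measure.prod_apply mS]; exact hS1
  have hle : (fun x => ν (Prod.mk x ⁻¹' S)) ≤ᵐ[μ] (fun _ => 1) :=
    Filter.Eventually.of_forall fun x => prob_le_one
  have hae : (fun x => ν (Prod.mk x ⁻¹' S)) =ᵐ[μ] (fun _ => 1) := by
    refine ae_eq_of_ae_le_of_lintegral_le hle (by rw [hint]; exact ENNReal.one_ne_top)
      aemeasurable_const ?_
    rw [hint, lintegral_const, one_mul, measure_univ]
  haveI : (ae μ).NeBot := ae_neBot.2 (IsProbabilityMeasure.ne_zero μ)
  obtain ⟨x₀, hx₀⟩ := hae.exists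
  -- hx₀ : ν {y | (x₀, y) ∈ S} = 1
  have mT : MeasurableSet {y : ℝ | (x₀, y) ∈ S} := by
    have : {y : ℝ | (x₀, y) ∈ S} = ⋃ n : ℤ, (fun y : ℝ => x₀ + y) ⁻¹' {a + b * n} := by
      ext y
      simp only [hS, Set.mem_setOf_eq, Set.mem_iUnion, Set.mem_preimage, Set.mem_singleton_iff]
    rw [this]
    exact MeasurableSet.iUnion fun n =>
      (measurable_const.add measurable_id) (measurableSet_singleton _)
  have hηae : ∀ᵐ ω ∂P, ∃ n : ℤ, x₀ + η ω = a + b * n := by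
    have : P (η ⁻¹' {y | (x₀, y) ∈ S}) = 1 := by
      rw [← Measure.map_apply hη mT]; exact hx₀
    rw [← prob_compl_eq_zero_iff (mT.preimage hη)] at this
    rw [ae_iff]
    convert this using 2
    rfl
  refine ⟨x₀, a - x₀, b, hb, ?_, ?_⟩
  · filter_upwards [hsum, hηae] with ω ⟨n, hn⟩ ⟨m, hm⟩
    refine ⟨n - m, ?_⟩
    have : η ω = a - x₀ + b * m := by linarith
    push_cast
    linarith
  · filter_upwards [hηae] with ω ⟨m, hm⟩
    exact ⟨m, by linarith⟩
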